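/- Let γ > 1 and let two ideal-MHD states satisfy ρ_L,ρ_R,p_L,p_R > 0, ρ_L ≠ ρ_R and β_L ≠ β_R where β = ρ/(2p). Then the discrete entropy Jacobian matrix 𝓗 built from these two states is symmetric positive definite. -/

import Mathlib

open Matrix

noncomputable section

/-- Arithmetic mean of a pair of states. -/
def am (x y : ℝ) : ℝ := (x + y) / 2

/-- Logarithmic mean of a pair of (positive, distinct) states. -/
noncomputable def lnM (x y : ℝ) : ℝ := (x - y) / (Real.log x - Real.log y)

/-- The logarithmic mean of distinct positive numbers is positive. -/
private lemma lnM_pos' {x y : ℝ} (hx : 0 < x) (hy : 0 < y) (hxy : x ≠ y) :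
    0 < lnM x y := by
  unfold lnM
  rcases hxy.lt_or_gt with h | h
  · have hl : Real.log x < Real.log y := Real.log_lt_log hx h
    exact div_pos_of_neg_of_neg (by linarith) (by linarith)
  · have hl : Real.log y < Real.log x := Real.log_lt_log hy h
    exact div_pos (by linarith) (by linarith)

private lemma cons_val_five' {α : Type*} (x : α) (u : Fin 7 → α) :
    Matrix.vecCons x u 5 = u 4 := rfl
private lemma cons_val_six' {α : Type*} (x : α) (u : Fin 7 → α) :
    Matrix.vecCons x u 6 = u 5 := rfl
private lemma cons_val_seven' {α : Type*} (x : α) (u : Fin 7 → α) :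
    Matrix.vecCons x u 7 = u 6 := rfl
private lemma cons_val_five7 {α : Type*} (x : α) (u : Fin 6 → α) :
    Matrix.vecCons x u 5 = u 4 := rfl
private lemma cons_val_six7 {α : Type*} (x : α) (u : Fin 6 → α) :
    Matrix.vecCons x u 6 = u 5 := rfl
private lemma cons_val_five6 {α : Type*} (x : α) (u : Fin 5 → α) :
    Matrix.vecCons x u 5 = u 4 := rfl

private lemma sum_sq_aux (r p t c A B C D E F G H : ℝ) (hr : 0 < r) (hp : 0 < p)
    (ht : 0 < t) (hc : 0 < c)
    (hle : r*A^2 + p*(B^2+C^2+D^2) + t*(E^2+F^2+G^2) + c*H^2 ≤ 0) :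
    A = 0 ∧ B = 0 ∧ C = 0 ∧ D = 0 ∧ E = 0 ∧ F = 0 ∧ G = 0 ∧ H = 0 := by
  have n1 : 0 ≤ r*A^2 := mul_nonneg hr.le (sq_nonneg A)
  have n2 : 0 ≤ p*(B^2+C^2+D^2) := mul_nonneg hp.le (by positivity)
  have n3 : 0 ≤ t*(E^2+F^2+G^2) := mul_nonneg ht.le (by positivity)
  have n4 : 0 ≤ c*H^2 := mul_nonneg hc.le (sq_nonneg H)
  have hA2 : A^2 ≤ 0 := by nlinarith [sq_nonneg A]
  have hBCD : B^2+C^2+D^2 ≤ 0 := by nlinarith [sq_nonneg B, sq_nonneg C, sq_nonneg D]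
  have hEFG : E^2+F^2+G^2 ≤ 0 := by nlinarith [sq_nonneg E, sq_nonneg F, sq_nonneg G]
  have hH2 : H^2 ≤ 0 := by nlinarith [sq_nonneg H]
  refine ⟨pow_eq_zero_iff two_ne_zero |>.mp (le_antisymm hA2 (sq_nonneg A)),
    pow_eq_zero_iff two_ne_zero |>.mp (le_antisymm (by nlinarith [sq_nonneg C, sq_nonneg D]) (sq_nonneg B)),
    pow_eq_zero_iff two_ne_zero |>.mp (le_antisymm (by nlinarith [sq_nonneg B, sq_nonneg D]) (sq_nonneg C)),
    pow_eq_zero_iff two_ne_zero |>.mp (le_antisymm (by nlinarith [sq_nonneg B, sq_nonneg C]) (sq_nonneg D)),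
    pow_eq_zero_iff two_ne_zero |>.mp (le_antisymm (by nlinarith [sq_nonneg F, sq_nonneg G]) (sq_nonneg E)),
    pow_eq_zero_iff two_ne_zero |>.mp (le_antisymm (by nlinarith [sq_nonneg E, sq_nonneg G]) (sq_nonneg F)),
    pow_eq_zero_iff two_ne_zero |>.mp (le_antisymm (by nlinarith [sq_nonneg E, sq_nonneg F]) (sq_nonneg G)),
    pow_eq_zero_iff two_ne_zero |>.mp (le_antisymm hH2 (sq_nonneg H))⟩

set_option maxHeartbeats 2000000 in
private lemma entropyAux (ρln Ebar pbar τ pln g au av aw aB1 aB2 aB3 : ℝ)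
    (hρ : 0 < ρln) (hp : 0 < pbar) (hτ : 0 < τ) (hpl : 0 < pln) (hg : 0 < g) :
    (Matrix.of
      ![![ρln, ρln * au, ρln * av, ρln * aw, Ebar, 0, 0, 0],
        ![ρln * au, ρln * au ^ 2 + pbar, ρln * au * av, ρln * au * aw, (Ebar + pbar) * au, 0, 0, 0],
        ![ρln * av, ρln * au * av, ρln * av ^ 2 + pbar, ρln * av * aw, (Ebar + pbar) * av, 0, 0, 0],
        ![ρln * aw, ρln * au * aw, ρln * av * aw, ρln * aw ^ 2 + pbar, (Ebar + pbar) * aw, 0, 0, 0],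
        ![Ebar, (Ebar + pbar) * au, (Ebar + pbar) * av, (Ebar + pbar) * aw,
          (1 / ρln) * (pln ^ 2 / g + Ebar ^ 2)
            + pbar * (au ^ 2 + av ^ 2 + aw ^ 2) + τ * (aB1 ^ 2 + aB2 ^ 2 + aB3 ^ 2),
          τ * aB1, τ * aB2, τ * aB3],
        ![0, 0, 0, 0, τ * aB1, τ, 0, 0],
        ![0, 0, 0, 0, τ * aB2, 0, τ, 0],
        ![0, 0, 0, 0, τ * aB3, 0, 0, τ]] : Matrix (Fin 8) (Fin 8) ℝ).PosDef := by
  rw [Matrix.posDef_iff_dotProduct_mulVec]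
  constructor
  · show _ᴴ = _
    ext i j
    fin_cases i <;> fin_cases j <;> rfl
  · intro x hx
    have key : star x ⬝ᵥ ((Matrix.of
      ![![ρln, ρln * au, ρln * av, ρln * aw, Ebar, 0, 0, 0],
        ![ρln * au, ρln * au ^ 2 + pbar, ρln * au * av, ρln * au * aw, (Ebar + pbar) * au, 0, 0, 0],
        ![ρln * av, ρln * au * av, ρln * av ^ 2 + pbar, ρln * av * aw, (Ebar + pbar) * av, 0, 0, 0],
        ![ρln * aw, ρln * au * aw, ρln * av * aw, ρln * aw ^ 2 + pbar, (Ebar + pbar) * aw, 0, 0, 0],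
        ![Ebar, (Ebar + pbar) * au, (Ebar + pbar) * av, (Ebar + pbar) * aw,
          (1 / ρln) * (pln ^ 2 / g + Ebar ^ 2)
            + pbar * (au ^ 2 + av ^ 2 + aw ^ 2) + τ * (aB1 ^ 2 + aB2 ^ 2 + aB3 ^ 2),
          τ * aB1, τ * aB2, τ * aB3],
        ![0, 0, 0, 0, τ * aB1, τ, 0, 0],
        ![0, 0, 0, 0, τ * aB2, 0, τ, 0],
        ![0, 0, 0, 0, τ * aB3, 0, 0, τ]] : Matrix (Fin 8) (Fin 8) ℝ) *ᵥ x) =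
        ρln*(x 0 + au*x 1 + av*x 2 + aw*x 3 + Ebar/ρln*x 4)^2
        + pbar*((x 1 + au*x 4)^2+(x 2+av*x 4)^2+(x 3+aw*x 4)^2)
        + τ*((x 5+aB1*x 4)^2+(x 6+aB2*x 4)^2+(x 7+aB3*x 4)^2)
        + (pln^2/(g*ρln))*(x 4)^2 := by
      simp only [star_trivial, dotProduct, Matrix.mulVec, Fin.sum_univ_eight,
        Matrix.of_apply, Matrix.cons_val_zero, Matrix.cons_val_one, Matrix.head_cons,
        Matrix.cons_val_two, Matrix.tail_cons, Matrix.cons_val_three, Matrix.cons_val_four,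
        cons_val_five', cons_val_six', cons_val_seven', cons_val_five7, cons_val_six7,
        cons_val_five6, Matrix.head_fin_const]
      field_simp
      ring
    rw [key]
    by_contra hcon
    push_neg at hcon
    obtain ⟨hA, hB, hC, hD, hE, hF, hG, hH⟩ :=
      sum_sq_aux ρln pbar τ (pln^2/(g*ρln)) _ _ _ _ _ _ _ _ hρ hp hτ
        (div_pos (pow_pos hpl 2) (mul_pos hg hρ)) hcon
    have h1 : x 1 = 0 := by rw [hH, mul_zero, add_zero] at hB; exact hB
    have h2 : x 2 = 0 := by rw [hH, mul_zero, add_zero] at hC; exact hC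
    have h3 : x 3 = 0 := by rw [hH, mul_zero, add_zero] at hD; exact hD
    have h5 : x 5 = 0 := by rw [hH, mul_zero, add_zero] at hE; exact hE
    have h6 : x 6 = 0 := by rw [hH, mul_zero, add_zero] at hF; exact hF
    have h7 : x 7 = 0 := by rw [hH, mul_zero, add_zero] at hG; exact hG
    have h0 : x 0 = 0 := by
      rw [h1, h2, h3, hH] at hA
      simpa using hA
    apply hx
    funext i
    fin_cases i <;> simp [h0, h1, h2, h3, hH, h5, h6, h7]

/-- the discrete entropy Jacobian matrix 𝓗 is symmetric positive definite. -/
theorem discrete_entropy_jacobian_posDef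
    (γ ρL uL vL wL pL B1L B2L B3L ρR uR vR wR pR B1R B2R B3R : ℝ)
    (hγ : 1 < γ) (hρL : 0 < ρL) (hρR : 0 < ρR) (hpL : 0 < pL) (hpR : 0 < pR)
    (hρ : ρL ≠ ρR) (hβ : ρL / (2 * pL) ≠ ρR / (2 * pR)) :
    let βL := ρL / (2 * pL)
    let βR := ρR / (2 * pR)
    let ρln := lnM ρL ρR
    let βln := lnM βL βR
    let pln := ρln / (2 * βln)
    let au := am uL uR
    let av := am vL vR
    let aw := am wL wR
    let aρ := am ρL ρR
    let aβ := am βL βR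
    let aB1 := am B1L B1R
    let aB2 := am B2L B2R
    let aB3 := am B3L B3R
    let ub2 := 2 * (au ^ 2 + av ^ 2 + aw ^ 2)
        - (am (uL ^ 2) (uR ^ 2) + am (vL ^ 2) (vR ^ 2) + am (wL ^ 2) (wR ^ 2))
    let Ebar := pln / (γ - 1) + ρln * ub2 / 2
    let pbar := aρ / (2 * aβ)
    let τ := 1 / (2 * aβ)
    let H55 := (1 / ρln) * (pln ^ 2 / (γ - 1) + Ebar ^ 2)
        + pbar * (au ^ 2 + av ^ 2 + aw ^ 2) + τ * (aB1 ^ 2 + aB2 ^ 2 + aB3 ^ 2)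
    let Hd : Matrix (Fin 8) (Fin 8) ℝ := Matrix.of
      ![![ρln, ρln * au, ρln * av, ρln * aw, Ebar, 0, 0, 0],
        ![ρln * au, ρln * au ^ 2 + pbar, ρln * au * av, ρln * au * aw, (Ebar + pbar) * au, 0, 0, 0],
        ![ρln * av, ρln * au * av, ρln * av ^ 2 + pbar, ρln * av * aw, (Ebar + pbar) * av, 0, 0, 0],
        ![ρln * aw, ρln * au * aw, ρln * av * aw, ρln * aw ^ 2 + pbar, (Ebar + pbar) * aw, 0, 0, 0],
        ![Ebar, (Ebar + pbar) * au, (Ebar + pbar) * av, (Ebar + pbar) * aw, H55,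
          τ * aB1, τ * aB2, τ * aB3],
        ![0, 0, 0, 0, τ * aB1, τ, 0, 0],
        ![0, 0, 0, 0, τ * aB2, 0, τ, 0],
        ![0, 0, 0, 0, τ * aB3, 0, 0, τ]]
    Hd.PosDef := by
  intro βL βR ρln βln pln au av aw aρ aβ aB1 aB2 aB3 ub2 Ebar pbar τ H55 Hd
  have hβL : 0 < βL := div_pos hρL (by linarith)
  have hβR : 0 < βR := div_pos hρR (by linarith)
  have hρln : 0 < ρln := lnM_pos' hρL hρR hρ
  have hβln : 0 < βln := lnM_pos' hβL hβR hβ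
  have hpln : 0 < pln := div_pos hρln (by linarith)
  have haβ : 0 < aβ := by
    show 0 < (βL + βR) / 2
    positivity
  have haρ : 0 < aρ := by
    show 0 < (ρL + ρR) / 2
    positivity
  have hpbar : 0 < pbar := div_pos haρ (by linarith)
  have hτ : 0 < τ := div_pos one_pos (by linarith)
  exact entropyAux ρln Ebar pbar τ pln (γ - 1) au av aw aB1 aB2 aB3
    hρln hpbar hτ hpln (by linarith)

end
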